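/- Let K be a commutative ring, let A be a (not necessarily unital) associative K-algebra, and let B be a two-sided ideal of A such that the quotient A/B is a finitely presented K-module. Then the quotient algebra A/B is finitely presented as a K-algebra. -/

import Mathlib

/-- The free non-unital associative `K`-algebra on `X`: the semigroup algebra of the free
semigroup `X⁺` over `K`. -/
abbrev FreeNUAlg (K X : Type*) [CommRing K] : Type _ := MonoidAlgebra K (FreeSemigroup X)

/-- The two-sided ideal (as a `K`-submodule closed under left and right multiplication)
generated by a set in a non-unital `K`-algebra. -/
def idealSpan (K : Type*) {A : Type*} [CommRing K] [NonUnitalRing A] [Module K A]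
    (s : Set A) : Submodule K A :=
  sInf {J : Submodule K A | s ⊆ J ∧ ∀ a b : A, b ∈ J → a * b ∈ J ∧ b * a ∈ J}

/-- A non-unital `K`-algebra is finitely generated if some finite subset generates it as a
`K`-algebra. -/
def NUAlgFG (K A : Type*) [CommRing K] [NonUnitalRing A] [Module K A]
    [IsScalarTower K A A] [SMulCommClass K A A] : Prop :=
  ∃ s : Finset A, NonUnitalAlgebra.adjoin K (s : Set A) = ⊤

/-- A non-unital `K`-algebra is finitely presented if it is isomorphic to the quotient of a
free algebra `K⟨X⟩` on a finite set `X` by a finitely generated two-sided ideal, i.e. there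
is a surjection from some `K⟨X⟩`, `X` finite, whose kernel is a finitely generated
two-sided ideal. -/
def NUAlgFP (K A : Type*) [CommRing K] [NonUnitalRing A] [Module K A]
    [IsScalarTower K A A] [SMulCommClass K A A] : Prop :=
  ∃ (n : ℕ) (f : FreeNUAlg K (Fin n) →ₙₐ[K] A),
    Function.Surjective f ∧
      ∃ s : Finset (FreeNUAlg K (Fin n)),
        ∀ x, f x = 0 ↔ x ∈ idealSpan K (s : Set (FreeNUAlg K (Fin n)))

section aux
variable {K A : Type*} [CommRing K] [NonUnitalRing A] [Module K A]

theorem subset_idealSpan' (s : Set A) : s ⊆ idealSpan K s :=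
  fun _ hx => Submodule.mem_sInf.2 fun _ hJ => hJ.1 hx

theorem idealSpan_mul_left {s : Set A} (a : A) {b : A} (hb : b ∈ idealSpan K s) :
    a * b ∈ idealSpan K s :=
  Submodule.mem_sInf.2 fun J hJ => (hJ.2 a b (Submodule.mem_sInf.1 hb J hJ)).1

theorem idealSpan_mul_right {s : Set A} (a : A) {b : A} (hb : b ∈ idealSpan K s) :
    b * a ∈ idealSpan K s :=
  Submodule.mem_sInf.2 fun J hJ => (hJ.2 a b (Submodule.mem_sInf.1 hb J hJ)).2

theorem idealSpan_le {s : Set A} {J : Submodule K A} (h1 : s ⊆ J)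
    (h2 : ∀ a b : A, b ∈ J → a * b ∈ J ∧ b * a ∈ J) : idealSpan K s ≤ J :=
  sInf_le ⟨h1, h2⟩

end aux

/-- Let `K` be a commutative ring, `A` a (not necessarily unital)
associative `K`-algebra and `B` a two-sided ideal of `A` (a `K`-subalgebra closed under
left and right multiplication by arbitrary elements of `A`) such that the quotient `A/B`
is a finitely presented `K`-module. Then the quotient algebra `A/B` — realized as any
`K`-algebra `C` together with a surjective homomorphism `A → C` with kernel `B` — is
finitely presented as a `K`-algebra. -/
theorem quotient_fp_of_quotient_module_fp
    (K A C : Type*) [CommRing K]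
    [NonUnitalRing A] [Module K A] [IsScalarTower K A A] [SMulCommClass K A A]
    [NonUnitalRing C] [Module K C] [IsScalarTower K C C] [SMulCommClass K C C]
    (B : NonUnitalSubalgebra K A)
    (hBl : ∀ a b : A, b ∈ B → a * b ∈ B) (hBr : ∀ a b : A, b ∈ B → b * a ∈ B)
    (hmod : Module.FinitePresentation K (A ⧸ B.toSubmodule))
    (f : A →ₙₐ[K] C) (hf : Function.Surjective f) (hker : ∀ x : A, f x = 0 ↔ x ∈ B) :
    NUAlgFP K C := by
  classical
  haveI := hmod
  -- `C` is finitely presented as a `K`-module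
  let fl : A →ₗ[K] C :=
    { toFun := f, map_add' := fun x y => map_add f x y,
      map_smul' := fun k x => map_smul f k x }
  have hfl : Function.Surjective fl := hf
  have hkfl : LinearMap.ker fl = B.toSubmodule := by
    ext x; simpa [fl, LinearMap.mem_ker] using hker x
  haveI : Module.FinitePresentation K C := by
    let e : (A ⧸ B.toSubmodule) ≃ₗ[K] C :=
      (Submodule.quotEquivOfEq _ _ hkfl.symm).trans (fl.quotKerEquivOfSurjective hfl)
    exact Module.finitePresentation_of_surjective e.toLinearMap e.surjective
      (by rw [LinearEquiv.ker]; exact Submodule.fg_bot)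
  -- module generators and relations
  obtain ⟨n, c, hc⟩ := Module.Finite.exists_fin (R := K) (M := C)
  let π : (Fin n → K) →ₗ[K] C := Fintype.linearCombination K c
  have hπ : Function.Surjective π := by
    rw [← LinearMap.range_eq_top, Fintype.range_linearCombination, hc]
  obtain ⟨t, ht⟩ := Module.FinitePresentation.fg_ker π hπ
  -- structure constants
  choose lam hlam using fun p : Fin n × Fin n => hπ (c p.1 * c p.2)
  -- the free algebra, the degree-one embedding and the presentation map
  let F := FreeNUAlg K (Fin n)
  let ι : (Fin n → K) →ₗ[K] F := Fintype.linearCombination K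
      (fun i => MonoidAlgebra.single (FreeSemigroup.of i) (1 : K))
  let φ : F →ₙₐ[K] C := MonoidAlgebra.liftMagma K (FreeSemigroup.lift c)
  have hφs : ∀ g : FreeSemigroup (Fin n),
      φ (MonoidAlgebra.single g 1) = FreeSemigroup.lift c g := by
    intro g
    rw [show φ (MonoidAlgebra.single g 1) =
        (MonoidAlgebra.single g (1:K)).coeff.sum fun m t => t • FreeSemigroup.lift c m from
      MonoidAlgebra.liftMagma_apply_apply K (FreeSemigroup.lift c) _,
      MonoidAlgebra.sum_single_index (by simp), one_smul]
  have hφι : ∀ v, φ (ι v) = π v := by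
    intro v
    simp only [ι, π, Fintype.linearCombination_apply, map_sum, map_smul, hφs,
      FreeSemigroup.lift_of]
  have hφsurj : Function.Surjective φ := fun y => by
    obtain ⟨v, hv⟩ := hπ y; exact ⟨ι v, by rw [hφι, hv]⟩
  -- the relations
  let rel1 : Finset F := Finset.image (fun p : Fin n × Fin n =>
    MonoidAlgebra.single (FreeSemigroup.of p.1 * FreeSemigroup.of p.2) (1 : K) - ι (lam p))
    Finset.univ
  let rel2 : Finset F := t.image ι
  refine ⟨n, φ, hφsurj, rel1 ∪ rel2, ?_⟩
  set s : Set F := ((rel1 ∪ rel2 : Finset F) : Set F) with hs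
  set J := idealSpan K s with hJdef
  have hrel1 : ∀ p : Fin n × Fin n,
      MonoidAlgebra.single (FreeSemigroup.of p.1 * FreeSemigroup.of p.2) (1 : K)
        - ι (lam p) ∈ J := by
    intro p
    exact subset_idealSpan' s (Finset.mem_coe.2 (Finset.mem_union_left _
      (Finset.mem_image.2 ⟨p, Finset.mem_univ p, rfl⟩)))
  have hrel2 : ∀ m ∈ t, ι m ∈ J := by
    intro m hm
    exact subset_idealSpan' s (Finset.mem_coe.2 (Finset.mem_union_right _
      (Finset.mem_image.2 ⟨m, hm, rfl⟩)))
  -- J is contained in the kernel of φ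
  have hJker : ∀ x ∈ J, φ x = 0 := by
    have : J ≤ LinearMap.ker
        ({ toFun := φ, map_add' := fun x y => map_add φ x y,
           map_smul' := fun k x => map_smul φ k x } : F →ₗ[K] C) := by
      apply idealSpan_le
      · intro x hx
        rcases Finset.mem_union.1 (Finset.mem_coe.1 hx) with hx' | hx'
        · obtain ⟨p, -, rfl⟩ := Finset.mem_image.1 hx'
          have : φ (MonoidAlgebra.single
              (FreeSemigroup.of p.1 * FreeSemigroup.of p.2) (1 : K) - ι (lam p)) = 0 := by
            rw [map_sub, hφs, hφι, map_mul, FreeSemigroup.lift_of, FreeSemigroup.lift_of,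
              hlam p, sub_self]
          simpa [LinearMap.mem_ker] using this
        · obtain ⟨m, hm, rfl⟩ := Finset.mem_image.1 hx'
          have hm' : m ∈ LinearMap.ker π := ht ▸ Submodule.subset_span hm
          have : φ (ι m) = 0 := by rw [hφι]; exact hm'
          simpa [LinearMap.mem_ker] using this
      · intro a b hb
        simp only [LinearMap.mem_ker, LinearMap.coe_mk, AddHom.coe_mk] at hb ⊢
        constructor <;> rw [map_mul, hb] <;> simp
    intro x hx
    simpa [LinearMap.mem_ker] using this hx
  -- every element reduces mod J to a degree-one element
  have key : ∀ x : F, ∃ v : Fin n → K, x - ι v ∈ J := by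
    intro x
    induction x using MonoidAlgebra.induction_linear with
    | zero => exact ⟨0, by simp⟩
    | add x y hx hy =>
      obtain ⟨v, hv⟩ := hx; obtain ⟨w, hw⟩ := hy
      refine ⟨v + w, ?_⟩
      rw [map_add, ← sub_add_sub_comm]
      exact J.add_mem hv hw
    | single g k =>
      suffices h : ∃ v, MonoidAlgebra.single g (1:K) - ι v ∈ J by
        obtain ⟨v, hv⟩ := h
        refine ⟨k • v, ?_⟩
        have := J.smul_mem k hv
        rw [smul_sub, ← map_smul] at this
        have hsing : k • MonoidAlgebra.single g (1:K) = MonoidAlgebra.single g k := by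
          rw [MonoidAlgebra.smul_single, smul_eq_mul, mul_one]
        rwa [hsing] at this
      induction g using FreeSemigroup.recOnMul with
      | ih1 i =>
        refine ⟨Pi.single i 1, ?_⟩
        have : ι (Pi.single i 1) = MonoidAlgebra.single (FreeSemigroup.of i) (1:K) := by
          simp [ι]
        rw [this, sub_self]; exact J.zero_mem
      | ih2 x y hx hy =>
        obtain ⟨v, hv⟩ := hx; obtain ⟨w, hw⟩ := hy
        refine ⟨∑ p : Fin n × Fin n, (v p.1 * w p.2) • lam p, ?_⟩
        have h1 : MonoidAlgebra.single (FreeSemigroup.of x * y) (1:K)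
            = MonoidAlgebra.single (FreeSemigroup.of x) (1:K) * MonoidAlgebra.single y (1:K) := by
          rw [MonoidAlgebra.single_mul_single, one_mul]
        have h2 : MonoidAlgebra.single (FreeSemigroup.of x) (1:K) * MonoidAlgebra.single y (1:K)
            - ι v * ι w ∈ J := by
          rw [show MonoidAlgebra.single (FreeSemigroup.of x) (1:K) * MonoidAlgebra.single y (1:K)
              - ι v * ι w = MonoidAlgebra.single (FreeSemigroup.of x) (1:K) *
                (MonoidAlgebra.single y (1:K) - ι w)
              + (MonoidAlgebra.single (FreeSemigroup.of x) (1:K) - ι v) * ι w by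
            rw [mul_sub, sub_mul, sub_add_sub_cancel]]
          exact J.add_mem
            (idealSpan_mul_left (MonoidAlgebra.single (FreeSemigroup.of x) (1:K)) hw)
            (idealSpan_mul_right (ι w) hv)
        have hexp : ι v * ι w = ∑ p : Fin n × Fin n,
            (v p.1 * w p.2) • MonoidAlgebra.single
              (FreeSemigroup.of p.1 * FreeSemigroup.of p.2) (1:K) := by
          show (Fintype.linearCombination K _ v) * (Fintype.linearCombination K _ w) = _
          rw [Fintype.linearCombination_apply, Fintype.linearCombination_apply,
            Finset.sum_mul_sum, ← Finset.sum_product']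
          refine Finset.sum_congr rfl fun p _ => ?_
          rw [smul_mul_smul_comm, MonoidAlgebra.single_mul_single, one_mul]
        have h3 : ι v * ι w - ι (∑ p : Fin n × Fin n, (v p.1 * w p.2) • lam p) ∈ J := by
          rw [hexp, map_sum, ← Finset.sum_sub_distrib]
          refine Submodule.sum_mem J fun p _ => ?_
          rw [map_smul, ← smul_sub]
          exact J.smul_mem _ (hrel1 p)
        rw [h1, ← sub_add_sub_cancel _ (ι v * ι w) _]
        exact J.add_mem h2 h3
  -- conclusion
  intro x
  constructor
  · intro hx0
    obtain ⟨v, hv⟩ := key x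
    have hπv : π v = 0 := by
      have h0 := hJker _ hv
      rw [map_sub, hx0, zero_sub, neg_eq_zero, hφι] at h0
      exact h0
    have hv' : v ∈ Submodule.span K (t : Set (Fin n → K)) := by
      rw [ht]; exact hπv
    have hιv : ι v ∈ J := by
      have : ι v ∈ Submodule.map ι (Submodule.span K (t : Set (Fin n → K))) :=
        Submodule.mem_map_of_mem hv'
      rw [Submodule.map_span] at this
      refine Submodule.span_le.2 ?_ this
      rintro z ⟨m, hm, rfl⟩
      exact hrel2 m hm
    have : x = (x - ι v) + ι v := by abel
    rw [this]
    exact J.add_mem hv hιv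
  · intro hx
    exact hJker x hx
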